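/- Let $t\geq 3$ and let $g_r \in \mathbb{Z}_2[w_2,w_3,w_4]$ satisfy $g_0=1$, $g_{-1}=g_{-2}=g_{-3}=0$, $g_r = w_2 g_{r-2} + w_3 g_{r-3} + w_4 g_{r-4}$ for $r\geq 1$. Then for every $i$ with $0\leq i\leq t-1$, the polynomial $g_{2^t-3+2^i}$ contains no monomial involving $w_4$. -/
import Mathlib


open MvPolynomial

section Aux

local notation "R2" => MvPolynomial (Fin 3) (ZMod 2)

set_option linter.unusedSectionVars false

private lemma pow_ge (k : ℕ) (hk : 2 ≤ k) : (4:ℤ) ≤ 2^k := by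
  calc (4:ℤ) = 2^2 := by norm_num
  _ ≤ 2^k := pow_le_pow_right₀ (by norm_num) hk

private lemma htwo : (2 : R2) = 0 := by
  have : ((2 : ℕ) : R2) = 0 := CharP.cast_eq_zero R2 2
  exact_mod_cast this

variable (g : ℤ → R2)
  (hneg : ∀ r : ℤ, -3 ≤ r → r < 0 → g r = 0)
  (h0 : g 0 = 1)
  (hrec : ∀ r : ℤ, 1 ≤ r →
      g r = X 0 * g (r - 2) + X 1 * g (r - 3) + X 2 * g (r - 4))

include hneg h0 hrec

private lemma gval1 : g 1 = 0 := by
  have h := hrec 1 (by norm_num)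
  rw [show (1:ℤ)-2 = -1 by norm_num, show (1:ℤ)-3 = -2 by norm_num,
    show (1:ℤ)-4 = -3 by norm_num,
    hneg (-1) (by norm_num) (by norm_num), hneg (-2) (by norm_num) (by norm_num),
    hneg (-3) (by norm_num) (by norm_num)] at h
  rw [h]; ring

private lemma gval2 : g 2 = X 0 := by
  have h := hrec 2 (by norm_num)
  rw [show (2:ℤ)-2 = 0 by norm_num, show (2:ℤ)-3 = -1 by norm_num,
    show (2:ℤ)-4 = -2 by norm_num, h0,
    hneg (-1) (by norm_num) (by norm_num), hneg (-2) (by norm_num) (by norm_num)] at h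
  rw [h]; ring

private lemma gval3 : g 3 = X 1 := by
  have h := hrec 3 (by norm_num)
  rw [show (3:ℤ)-2 = 1 by norm_num, show (3:ℤ)-3 = 0 by norm_num,
    show (3:ℤ)-4 = -1 by norm_num, h0, gval1 g hneg h0 hrec,
    hneg (-1) (by norm_num) (by norm_num)] at h
  rw [h]; ring

private lemma doubling : ∀ n : ℕ,
    (g (2*(n:ℤ)) = (g n)^2 + X 0 * (g ((n:ℤ)-1))^2 + X 2 * (g ((n:ℤ)-2))^2) ∧
    (g (2*(n:ℤ)+1) = X 1 * (g ((n:ℤ)-1))^2) := by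
  intro n
  induction n using Nat.strong_induction_on with
  | _ n IH =>
    match n, IH with
    | 0, _ =>
      constructor
      · rw [show (2*((0:ℕ):ℤ)) = 0 by norm_num, show ((0:ℕ):ℤ)-1 = -1 by norm_num,
          show ((0:ℕ):ℤ)-2 = -2 by norm_num, h0,
          hneg (-1) (by norm_num) (by norm_num), hneg (-2) (by norm_num) (by norm_num)]
        rw [Nat.cast_zero, h0]; ring
      · rw [show (2*((0:ℕ):ℤ)+1) = 1 by norm_num, show ((0:ℕ):ℤ)-1 = -1 by norm_num,
          gval1 g hneg h0 hrec, hneg (-1) (by norm_num) (by norm_num)]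
        ring
    | 1, _ =>
      constructor
      · rw [show (2*((1:ℕ):ℤ)) = 2 by norm_num, show ((1:ℕ):ℤ)-1 = 0 by norm_num,
          show ((1:ℕ):ℤ)-2 = -1 by norm_num, h0, gval2 g hneg h0 hrec,
          Nat.cast_one, gval1 g hneg h0 hrec,
          hneg (-1) (by norm_num) (by norm_num)]
        ring
      · rw [show (2*((1:ℕ):ℤ)+1) = 3 by norm_num, show ((1:ℕ):ℤ)-1 = 0 by norm_num,
          h0, gval3 g hneg h0 hrec]
        ring
    | (m+2), IH =>
      have hk1 : ((m+1:ℕ):ℤ) = ((m+2:ℕ):ℤ) - 1 := by push_cast; ring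
      have hk2 : ((m:ℕ):ℤ) = ((m+2:ℕ):ℤ) - 2 := by push_cast; ring
      set k : ℤ := ((m+2:ℕ):ℤ) with hkdef
      have hkge : 2 ≤ k := by rw [hkdef]; push_cast; omega
      have IH1 := IH (m+1) (by omega)
      have IH2 := IH m (by omega)
      rw [hk1] at IH1
      rw [hk2] at IH2
      obtain ⟨hE1, hO1⟩ := IH1
      obtain ⟨hE2, hO2⟩ := IH2
      rw [show (k-1-1 : ℤ) = k-2 by ring, show (k-1-2 : ℤ) = k-3 by ring] at hE1
      rw [show (k-1-1 : ℤ) = k-2 by ring] at hO1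
      rw [show (k-2-1 : ℤ) = k-3 by ring, show (k-2-2 : ℤ) = k-4 by ring] at hE2
      rw [show (k-2-1 : ℤ) = k-3 by ring] at hO2
      have h_k : g k = X 0 * g (k-2) + X 1 * g (k-3) + X 2 * g (k-4) :=
        hrec k (by omega)
      have hA := hrec (2*k) (by omega)
      rw [show (2*k-2 : ℤ) = 2*(k-1) by ring, show (2*k-3 : ℤ) = 2*(k-2)+1 by ring,
        show (2*k-4 : ℤ) = 2*(k-2) by ring] at hA
      have hB := hrec (2*k+1) (by omega)
      rw [show (2*k+1-2 : ℤ) = 2*(k-1)+1 by ring, show (2*k+1-3 : ℤ) = 2*(k-1) by ring,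
        show (2*k+1-4 : ℤ) = 2*(k-2)+1 by ring] at hB
      constructor
      · linear_combination hA + X 0 * hE1 + X 1 * hO2 + X 2 * hE2
          - (g k + X 0 * g (k-2) + X 1 * g (k-3) + X 2 * g (k-4)) * h_k
          + (X 0 * X 2 * (g (k-3))^2 - X 0 * X 1 * (g (k-2)) * (g (k-3))
            - X 0 * X 2 * (g (k-2)) * (g (k-4)) - X 1 * X 2 * (g (k-3)) * (g (k-4))) * htwo
      · linear_combination hB + X 0 * hO1 + X 1 * hE1 + X 2 * hO2
          + (X 0 * X 1 * (g (k-2))^2 + X 1 * X 2 * (g (k-3))^2) * htwo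

private lemma dbl_even (k : ℤ) (hk : 0 ≤ k) :
    g (2*k) = (g k)^2 + X 0 * (g (k-1))^2 + X 2 * (g (k-2))^2 := by
  obtain ⟨n, rfl⟩ := Int.eq_ofNat_of_zero_le hk
  exact (doubling g hneg h0 hrec n).1

private lemma dbl_odd (k : ℤ) (hk : 0 ≤ k) :
    g (2*k+1) = X 1 * (g (k-1))^2 := by
  obtain ⟨n, rfl⟩ := Int.eq_ofNat_of_zero_le hk
  exact (doubling g hneg h0 hrec n).2

private lemma gzero : ∀ k : ℕ, 2 ≤ k → g ((2:ℤ)^k - 3) = 0 := by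
  intro k hk
  induction k, hk using Nat.le_induction with
  | base =>
    rw [show ((2:ℤ)^2 - 3) = 1 by norm_num]
    exact gval1 g hneg h0 hrec
  | succ k hk IHk =>
    have hpos : (0:ℤ) ≤ (2:ℤ)^k - 2 := by have := pow_ge k hk; omega
    have h := dbl_odd g hneg h0 hrec ((2:ℤ)^k - 2) hpos
    rw [show (2*((2:ℤ)^k - 2)+1) = 2^(k+1) - 3 by ring,
      show ((2:ℤ)^k - 2 - 1) = 2^k - 3 by ring, IHk] at h
    rw [h]; ring

private lemma wfree_pow : ∀ s : ℕ, 1 ≤ s →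
    g ((2:ℤ)^s - 2) ∈ supported (ZMod 2) ({0,1} : Set (Fin 3)) := by
  intro s
  induction s using Nat.strong_induction_on with
  | _ s IH =>
    match s, IH with
    | 0, _ => intro h; omega
    | 1, _ =>
      intro _
      rw [show ((2:ℤ)^1 - 2) = 0 by norm_num, h0]
      exact one_mem _
    | 2, _ =>
      intro _
      rw [show ((2:ℤ)^2 - 2) = 2 by norm_num, gval2 g hneg h0 hrec]
      exact X_mem_supported.mpr (by norm_num)
    | (m+3), IH =>
      intro _
      have hpos1 : (0:ℤ) ≤ (2:ℤ)^(m+2) - 1 := by have := pow_ge (m+2) (by omega); omega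
      have hE := dbl_even g hneg h0 hrec ((2:ℤ)^(m+2) - 1) hpos1
      rw [show (2*((2:ℤ)^(m+2) - 1)) = 2^(m+3) - 2 by ring,
        show ((2:ℤ)^(m+2) - 1 - 1) = 2^(m+2) - 2 by ring,
        show ((2:ℤ)^(m+2) - 1 - 2) = 2^(m+2) - 3 by ring,
        gzero g hneg h0 hrec (m+2) (by omega)] at hE
      have hpos2 : (0:ℤ) ≤ (2:ℤ)^(m+1) - 1 := by
        have : (0:ℤ) < 2^(m+1) := by positivity
        omega
      have hO := dbl_odd g hneg h0 hrec ((2:ℤ)^(m+1) - 1) hpos2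
      rw [show (2*((2:ℤ)^(m+1) - 1)+1) = 2^(m+2) - 1 by ring,
        show ((2:ℤ)^(m+1) - 1 - 1) = 2^(m+1) - 2 by ring] at hO
      rw [hE, hO]
      have h1 := IH (m+1) (by omega) (by omega)
      have h2 := IH (m+2) (by omega) (by omega)
      have hx0 : (X 0 : R2) ∈ supported (ZMod 2) ({0,1} : Set (Fin 3)) :=
        X_mem_supported.mpr (by norm_num)
      have hx1 : (X 1 : R2) ∈ supported (ZMod 2) ({0,1} : Set (Fin 3)) :=
        X_mem_supported.mpr (by norm_num)
      refine add_mem (add_mem ?_ ?_) ?_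
      · exact pow_mem (mul_mem hx1 (pow_mem h1 2)) 2
      · exact mul_mem hx0 (pow_mem h2 2)
      · rw [mul_comm]
        simp only [zero_pow, ne_eq, OfNat.ofNat_ne_zero, not_false_eq_true, zero_mul]
        exact zero_mem _

private lemma descent : ∀ i t : ℕ, i < t →
    g ((2:ℤ)^t + 2^i - 3) ∈ supported (ZMod 2) ({0,1} : Set (Fin 3)) := by
  intro i
  induction i with
  | zero =>
    intro t ht
    rw [show ((2:ℤ)^t + 2^0 - 3) = 2^t - 2 by ring]
    exact wfree_pow g hneg h0 hrec t ht
  | succ i IHi =>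
    intro t ht
    obtain ⟨s, rfl⟩ : ∃ s, t = s + 1 := ⟨t - 1, by omega⟩
    have hpos : (0:ℤ) ≤ (2:ℤ)^s + 2^i - 2 := by
      have h1 : (0:ℤ) < 2^s := by positivity
      have h2 : (0:ℤ) < 2^i := by positivity
      omega
    have hO := dbl_odd g hneg h0 hrec ((2:ℤ)^s + 2^i - 2) hpos
    rw [show (2*((2:ℤ)^s + 2^i - 2)+1) = 2^(s+1) + 2^(i+1) - 3 by ring,
      show ((2:ℤ)^s + 2^i - 2 - 1) = 2^s + 2^i - 3 by ring] at hO
    rw [hO]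
    have hx1 : (X 1 : R2) ∈ supported (ZMod 2) ({0,1} : Set (Fin 3)) :=
      X_mem_supported.mpr (by norm_num)
    exact mul_mem hx1 (pow_mem (IHi s (by omega)) 2)

end Aux

/-- For `t ≥ 3` and `0 ≤ i ≤ t-1`, the polynomial `g_{2^t - 3 + 2^i}`
(in `ℤ₂[w₂,w₃,w₄]`, with `X 0 = w₂`, `X 1 = w₃`, `X 2 = w₄`) contains no monomial
involving `w₄`. -/
theorem stmt_6 (t : ℕ) (ht : 3 ≤ t)
    (g : ℤ → MvPolynomial (Fin 3) (ZMod 2))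
    (hneg : ∀ r : ℤ, -3 ≤ r → r < 0 → g r = 0)
    (h0 : g 0 = 1)
    (hrec : ∀ r : ℤ, 1 ≤ r →
      g r = X 0 * g (r - 2) + X 1 * g (r - 3) + X 2 * g (r - 4)) :
    ∀ i : ℕ, i ≤ t - 1 →
      ∀ d ∈ (g ((2 : ℤ) ^ t - 3 + 2 ^ i)).support, d 2 = 0 := by
  intro i hi d hd
  have hmem : g ((2:ℤ)^t + 2^i - 3) ∈ supported (ZMod 2) ({0,1} : Set (Fin 3)) :=
    descent g hneg h0 hrec i t (by omega)
  rw [show ((2:ℤ)^t - 3 + 2^i) = 2^t + 2^i - 3 by ring] at hd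
  have hvars := mem_supported.mp hmem
  by_contra hne
  have h2supp : (2 : Fin 3) ∈ d.support := Finsupp.mem_support_iff.mpr hne
  have h2vars : (2 : Fin 3) ∈ (g ((2:ℤ)^t + 2^i - 3)).vars :=
    (mem_vars 2).mpr ⟨d, hd, h2supp⟩
  have hfin := hvars h2vars
  simp at hfin
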